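/- For each of the seven types R_N ∈ {A_{N−1}, B_N, B_N^∨, C_N, C_N^∨, BC_N, D_N}, the weight Q^{R_N}(z) is doubly periodic with periods (L, iW): for every m ∈ {1,…,N} and every z ∈ ℂᴺ, Q^{R_N}(z₁,…,z_m+L,…,z_N) = Q^{R_N}(z) and Q^{R_N}(z₁,…,z_m+iW,…,z_N) = Q^{R_N}(z). -/

import Mathlib

open Complex MeasureTheory
open scoped Real ComplexConjugate

noncomputable section

/-- The Jacobi theta function θ₀. -/
def jtheta0 (v τ : ℂ) : ℂ :=
  ∑' n : ℤ, (-1 : ℂ) ^ n * Complex.exp (π * I * τ * (n : ℂ) ^ 2) *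
    Complex.exp (2 * π * I * (n : ℂ) * v)

/-- The Jacobi theta function θ₁. -/
def jtheta1 (v τ : ℂ) : ℂ :=
  I * ∑' n : ℤ, (-1 : ℂ) ^ n * Complex.exp (π * I * τ * ((n : ℂ) - 1 / 2) ^ 2) *
    Complex.exp ((2 * (n : ℂ) - 1) * π * I * v)

/-- The Jacobi theta function θ₂. -/
def jtheta2 (v τ : ℂ) : ℂ :=
  ∑' n : ℤ, Complex.exp (π * I * τ * ((n : ℂ) - 1 / 2) ^ 2) *
    Complex.exp ((2 * (n : ℂ) - 1) * π * I * v)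

/-- The Jacobi theta function θ₃. -/
def jtheta3 (v τ : ℂ) : ℂ :=
  ∑' n : ℤ, Complex.exp (π * I * τ * (n : ℂ) ^ 2) * Complex.exp (2 * π * I * (n : ℂ) * v)

/-- Dedekind's eta function. -/
def dedekindEta (τ : ℂ) : ℂ :=
  Complex.exp (π * I * τ / 12) * ∏' n : ℕ, (1 - Complex.exp (2 * π * I * ((n : ℂ) + 1) * τ))

/-- The seven types of irreducible reduced affine root systems. -/
inductive RootType | A | B | Bv | C | Cv | BC | D

/-- The constant 𝒩 for each type. -/
def calN (R : RootType) (N : ℕ) : ℕ :=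
  match R with
  | .A => N
  | .B => 2 * N - 1
  | .Bv => 2 * N
  | .C => 2 * (N + 1)
  | .Cv => 2 * N
  | .BC => 2 * N + 1
  | .D => 2 * (N - 1)

/-- Product over ordered pairs j < k. -/
def pairProd {N : ℕ} (f : Fin N → Fin N → ℂ) : ℂ :=
  ∏ j : Fin N, ∏ k : Fin N, if j < k then f j k else 1

/-- P(ξ;τ) = ∏_{j<k} θ₁(ξ_k−ξ_j;τ) θ₁(ξ_k+ξ_j;τ). -/
def Pden {N : ℕ} (ξ : Fin N → ℂ) (τ : ℂ) : ℂ :=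
  pairProd fun j k => jtheta1 (ξ k - ξ j) τ * jtheta1 (ξ k + ξ j) τ

/-- The Macdonald denominators W^{R_N}(ξ;τ). -/
def WR (R : RootType) {N : ℕ} (ξ : Fin N → ℂ) (τ : ℂ) : ℂ :=
  match R with
  | .A => pairProd fun j k => jtheta1 (ξ k - ξ j) τ
  | .B => (∏ l : Fin N, jtheta1 (ξ l) τ) * Pden ξ τ
  | .Bv => (∏ l : Fin N, jtheta1 (2 * ξ l) (2 * τ)) * Pden ξ τ
  | .C => (∏ l : Fin N, jtheta1 (2 * ξ l) τ) * Pden ξ τ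
  | .Cv => (∏ l : Fin N, jtheta1 (ξ l) (τ / 2)) * Pden ξ τ
  | .BC => (∏ l : Fin N, jtheta1 (ξ l) τ * jtheta0 (2 * ξ l) (2 * τ)) * Pden ξ τ
  | .D => Pden ξ τ

/-- The doubly periodic weight Q^{R_N}(z). -/
def QR (R : RootType) {N : ℕ} (L W : ℝ) (z : Fin N → ℂ) : ℝ :=
  match R with
  | .A =>
      Real.exp (-(2 * π * N / (L * W)) * ∑ j, (z j).im ^ 2) *
        ‖(if Even N then jtheta0 (∑ k, z k / L) (I * W / L)
          else jtheta3 (∑ k, z k / L) (I * W / L))‖ ^ 2 *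
        ‖(WR RootType.A (fun j => z j / L) (I * W / L))‖ ^ 2
  | _ =>
      Real.exp (-(2 * π * (calN R N) / (L * W)) * ∑ j, (z j).im ^ 2) *
        ‖(WR R (fun j => z j / L) (I * W / L))‖ ^ 2

lemma exp_neg_pi_I : Complex.exp (-(π * I)) = -1 := by
  rw [Complex.exp_neg, Complex.exp_pi_mul_I]; norm_num

lemma jtheta1_add_one (v τ : ℂ) : jtheta1 (v + 1) τ = -jtheta1 v τ := by
  unfold jtheta1
  have h : ∀ n : ℤ, (-1 : ℂ) ^ n * Complex.exp (π * I * τ * ((n : ℂ) - 1 / 2) ^ 2) *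
      Complex.exp ((2 * (n : ℂ) - 1) * π * I * (v + 1))
      = -((-1 : ℂ) ^ n * Complex.exp (π * I * τ * ((n : ℂ) - 1 / 2) ^ 2) *
      Complex.exp ((2 * (n : ℂ) - 1) * π * I * v)) := by
    intro n
    have h1 : (2 * (n : ℂ) - 1) * π * I * (v + 1)
        = (2 * (n : ℂ) - 1) * π * I * v + ((n : ℂ) * (2 * π * I) + -(π * I)) := by ring
    rw [h1, Complex.exp_add, Complex.exp_add, Complex.exp_int_mul_two_pi_mul_I, exp_neg_pi_I]
    ring
  simp only [h]
  rw [tsum_neg]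
  ring

lemma jtheta0_add_one (v τ : ℂ) : jtheta0 (v + 1) τ = jtheta0 v τ := by
  unfold jtheta0
  congr 1; funext n
  have h1 : 2 * (π:ℂ) * I * (n : ℂ) * (v + 1) = 2 * π * I * (n : ℂ) * v + (n : ℂ) * (2 * π * I) := by
    ring
  rw [h1, Complex.exp_add, Complex.exp_int_mul_two_pi_mul_I, mul_one]

lemma jtheta3_add_one (v τ : ℂ) : jtheta3 (v + 1) τ = jtheta3 v τ := by
  unfold jtheta3
  congr 1; funext n
  have h1 : 2 * (π:ℂ) * I * (n : ℂ) * (v + 1) = 2 * π * I * (n : ℂ) * v + (n : ℂ) * (2 * π * I) := by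
    ring
  rw [h1, Complex.exp_add, Complex.exp_int_mul_two_pi_mul_I, mul_one]

lemma jtheta1_add_tau (v τ : ℂ) :
    jtheta1 (v + τ) τ = -Complex.exp (-(π * I * τ) - 2 * π * I * v) * jtheta1 v τ := by
  unfold jtheta1
  have key : (fun n : ℤ => (-1 : ℂ) ^ n * Complex.exp (π * I * τ * ((n : ℂ) - 1 / 2) ^ 2) *
      Complex.exp ((2 * (n : ℂ) - 1) * π * I * (v + τ)))
      = fun n : ℤ => -Complex.exp (-(π * I * τ) - 2 * π * I * v) *
        ((fun k : ℤ => (-1 : ℂ) ^ k * Complex.exp (π * I * τ * ((k : ℂ) - 1 / 2) ^ 2) *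
          Complex.exp ((2 * (k : ℂ) - 1) * π * I * v)) ((Equiv.addRight (1 : ℤ)) n)) := by
    funext n
    simp only [Equiv.coe_addRight]
    push_cast
    rw [zpow_add_one₀ (by norm_num : (-1 : ℂ) ≠ 0)]
    have e1 : Complex.exp (π * I * τ * ((n : ℂ) - 1 / 2) ^ 2) *
        Complex.exp ((2 * (n : ℂ) - 1) * π * I * (v + τ))
        = Complex.exp (-(π * I * τ) - 2 * π * I * v) *
          (Complex.exp (π * I * τ * (((n : ℂ) + 1) - 1 / 2) ^ 2) *
            Complex.exp ((2 * ((n : ℂ) + 1) - 1) * π * I * v)) := by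
      rw [← Complex.exp_add, ← Complex.exp_add, ← Complex.exp_add]
      congr 1; ring
    rw [mul_assoc, e1]; ring
  rw [key, tsum_mul_left,
    (Equiv.addRight (1 : ℤ)).tsum_eq (fun k : ℤ => (-1 : ℂ) ^ k *
      Complex.exp (π * I * τ * ((k : ℂ) - 1 / 2) ^ 2) *
      Complex.exp ((2 * (k : ℂ) - 1) * π * I * v))]
  ring

lemma jtheta0_add_tau (v τ : ℂ) :
    jtheta0 (v + τ) τ = -Complex.exp (-(π * I * τ) - 2 * π * I * v) * jtheta0 v τ := by
  unfold jtheta0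
  have key : (fun n : ℤ => (-1 : ℂ) ^ n * Complex.exp (π * I * τ * (n : ℂ) ^ 2) *
      Complex.exp (2 * π * I * (n : ℂ) * (v + τ)))
      = fun n : ℤ => -Complex.exp (-(π * I * τ) - 2 * π * I * v) *
        ((fun k : ℤ => (-1 : ℂ) ^ k * Complex.exp (π * I * τ * (k : ℂ) ^ 2) *
          Complex.exp (2 * π * I * (k : ℂ) * v)) ((Equiv.addRight (1 : ℤ)) n)) := by
    funext n
    simp only [Equiv.coe_addRight]
    push_cast
    rw [zpow_add_one₀ (by norm_num : (-1 : ℂ) ≠ 0)]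
    have e1 : Complex.exp (π * I * τ * (n : ℂ) ^ 2) * Complex.exp (2 * π * I * (n : ℂ) * (v + τ))
        = Complex.exp (-(π * I * τ) - 2 * π * I * v) *
          (Complex.exp (π * I * τ * ((n : ℂ) + 1) ^ 2) *
            Complex.exp (2 * π * I * ((n : ℂ) + 1) * v)) := by
      rw [← Complex.exp_add, ← Complex.exp_add, ← Complex.exp_add]
      congr 1; ring
    rw [mul_assoc, e1]; ring
  rw [key, tsum_mul_left,
    (Equiv.addRight (1 : ℤ)).tsum_eq (fun k : ℤ => (-1 : ℂ) ^ k *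
      Complex.exp (π * I * τ * (k : ℂ) ^ 2) * Complex.exp (2 * π * I * (k : ℂ) * v))]

lemma jtheta3_add_tau (v τ : ℂ) :
    jtheta3 (v + τ) τ = Complex.exp (-(π * I * τ) - 2 * π * I * v) * jtheta3 v τ := by
  unfold jtheta3
  have key : (fun n : ℤ => Complex.exp (π * I * τ * (n : ℂ) ^ 2) *
      Complex.exp (2 * π * I * (n : ℂ) * (v + τ)))
      = fun n : ℤ => Complex.exp (-(π * I * τ) - 2 * π * I * v) *
        ((fun k : ℤ => Complex.exp (π * I * τ * (k : ℂ) ^ 2) *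
          Complex.exp (2 * π * I * (k : ℂ) * v)) ((Equiv.addRight (1 : ℤ)) n)) := by
    funext n
    simp only [Equiv.coe_addRight]
    push_cast
    rw [← Complex.exp_add, ← Complex.exp_add, ← Complex.exp_add]
    congr 1; ring
  rw [key, tsum_mul_left,
    (Equiv.addRight (1 : ℤ)).tsum_eq (fun k : ℤ =>
      Complex.exp (π * I * τ * (k : ℂ) ^ 2) * Complex.exp (2 * π * I * (k : ℂ) * v))]

lemma jtheta1_sub_tau (v τ : ℂ) :
    jtheta1 (v - τ) τ = -Complex.exp (-(π * I * τ) + 2 * π * I * v) * jtheta1 v τ := by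
  have h := jtheta1_add_tau (v - τ) τ
  rw [sub_add_cancel] at h
  rw [h, ← mul_assoc, neg_mul_neg, ← Complex.exp_add,
    show -(π * I * τ) + 2 * π * I * v + (-(π * I * τ) - 2 * π * I * (v - τ)) = 0 by ring,
    Complex.exp_zero, one_mul]

lemma jtheta1_sub_one (v τ : ℂ) : jtheta1 (v - 1) τ = -jtheta1 v τ := by
  have h := jtheta1_add_one (v - 1) τ
  rw [sub_add_cancel] at h
  rw [h, neg_neg]

lemma pairProd_congr {N : ℕ} {f g : Fin N → Fin N → ℂ}
    (h : ∀ j k, j < k → f j k = g j k) : pairProd f = pairProd g := by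
  unfold pairProd
  refine Finset.prod_congr rfl fun j _ => Finset.prod_congr rfl fun k _ => ?_
  by_cases hjk : j < k
  · simp [hjk, h j k hjk]
  · simp [hjk]

lemma pairProd_mul {N : ℕ} (f g : Fin N → Fin N → ℂ) :
    pairProd (fun j k => f j k * g j k) = pairProd f * pairProd g := by
  unfold pairProd
  rw [← Finset.prod_mul_distrib]
  refine Finset.prod_congr rfl fun j _ => ?_
  rw [← Finset.prod_mul_distrib]
  refine Finset.prod_congr rfl fun k _ => ?_
  by_cases hjk : j < k <;> simp [hjk]

lemma pairProd_rowcol {N : ℕ} (m : Fin N) (r : Fin N → Fin N → ℂ)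
    (row col : Fin N → ℂ)
    (h1 : ∀ j k, j < k → j ≠ m → k ≠ m → r j k = 1)
    (hrow : ∀ j, j < m → r j m = row j)
    (hcol : ∀ k, m < k → r m k = col k) :
    pairProd r = (∏ j, if j < m then row j else 1) * ∏ k, if m < k then col k else 1 := by
  unfold pairProd
  have hinner : ∀ j : Fin N, j ≠ m →
      (∏ k, if j < k then r j k else 1) = if j < m then row j else 1 := by
    intro j hj
    rw [Finset.prod_eq_single m]
    · by_cases hjm : j < m
      · simp [hjm, hrow j hjm]
      · simp [hjm]
    · intro k _ hk
      by_cases hjk : j < k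
      · rw [if_pos hjk, h1 j k hjk hj hk]
      · rw [if_neg hjk]
    · simp
  have hm : (∏ k, if m < k then r m k else 1) = ∏ k, if m < k then col k else 1 := by
    refine Finset.prod_congr rfl fun k _ => ?_
    by_cases hmk : m < k
    · simp [hmk, hcol k hmk]
    · simp [hmk]
  rw [← Finset.mul_prod_erase Finset.univ _ (Finset.mem_univ m), hm]
  rw [Finset.prod_congr rfl (fun j hj => hinner j (Finset.ne_of_mem_erase hj))]
  have he : (∏ j ∈ Finset.univ.erase m, if j < m then row j else 1)
      = ∏ j, if j < m then row j else 1 :=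
    Finset.prod_erase _ (by simp)
  rw [he]
  ring

lemma prod_ite_lt {N : ℕ} (m : Fin N) (c : ℂ) :
    (∏ j : Fin N, if j < m then c else 1) = c ^ (m : ℕ) := by
  rw [Finset.prod_ite, Finset.prod_const, Finset.prod_const_one, mul_one]
  congr 1
  have : Finset.univ.filter (fun j : Fin N => j < m) = Finset.Iio m := by
    ext j; simp
  rw [this, Fin.card_Iio]

lemma prod_ite_gt {N : ℕ} (m : Fin N) (c : ℂ) :
    (∏ k : Fin N, if m < k then c else 1) = c ^ (N - 1 - (m : ℕ)) := by
  rw [Finset.prod_ite, Finset.prod_const, Finset.prod_const_one, mul_one]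
  congr 1
  have : Finset.univ.filter (fun k : Fin N => m < k) = Finset.Ioi m := by
    ext k; simp
  rw [this, Fin.card_Ioi]

lemma prod_comp_update {N : ℕ} (ξ : Fin N → ℂ) (m : Fin N) (c : ℂ) (g : ℂ → ℂ) (μ : ℂ)
    (hg : g c = μ * g (ξ m)) :
    (∏ l, g (Function.update ξ m c l)) = μ * ∏ l, g (ξ l) := by
  rw [← Finset.mul_prod_erase Finset.univ (fun l => g (Function.update ξ m c l))
      (Finset.mem_univ m),
    ← Finset.mul_prod_erase Finset.univ (fun l => g (ξ l)) (Finset.mem_univ m)]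
  simp only [Function.update_self]
  rw [hg, Finset.prod_congr rfl
    (fun j hj => by rw [Function.update_of_ne (Finset.ne_of_mem_erase hj)])]
  ring

lemma prod_ite_exp {N : ℕ} (p : Fin N → Prop) [DecidablePred p] (a : Fin N → ℝ) :
    (∏ j, if p j then Real.exp (a j) else 1) = Real.exp (∑ j, if p j then a j else 0) := by
  rw [Real.exp_sum]
  refine Finset.prod_congr rfl fun j _ => ?_
  by_cases hj : p j <;> simp [hj]

lemma sum_split {N : ℕ} (m : Fin N) (f : Fin N → ℝ) :
    ((∑ j, if j < m then f j else 0) + ∑ j, if m < j then f j else 0)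
      = (∑ j, f j) - f m := by
  rw [← Finset.sum_add_distrib]
  have h : ∀ j : Fin N, ((if j < m then f j else 0) + if m < j then f j else 0)
      = f j - (if j = m then f j else 0) := by
    intro j
    rcases lt_trichotomy j m with h | h | h
    · simp [h, not_lt_of_gt h, ne_of_lt h]
    · simp [h]
    · simp [h, not_lt_of_gt h, (ne_of_gt h)]
  rw [Finset.sum_congr rfl fun j _ => h j, Finset.sum_sub_distrib,
    Finset.sum_ite_eq' Finset.univ m f]
  simp

lemma Pden_update_tau {N : ℕ} (ξ : Fin N → ℂ) (τ : ℂ) (m : Fin N) :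
    Pden (Function.update ξ m (ξ m + τ)) τ
      = Complex.exp (-(2 * π * I * τ) - 4 * π * I * ξ m) ^ (N - 1) * Pden ξ τ := by
  set q : ℂ := Complex.exp (-(2 * π * I * τ) - 4 * π * I * ξ m) with hq
  have hsplit : Pden (Function.update ξ m (ξ m + τ)) τ
      = pairProd (fun j k => (if j = m ∨ k = m then q else 1) *
          (jtheta1 (ξ k - ξ j) τ * jtheta1 (ξ k + ξ j) τ)) := by
    unfold Pden
    apply pairProd_congr
    intro j k hjk
    rcases eq_or_ne m k with rfl | hk
    · have hj : j ≠ m := ne_of_lt hjk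
      simp only [Function.update_self, Function.update_of_ne hj]
      rw [show ξ m + τ - ξ j = (ξ m - ξ j) + τ by ring,
        show ξ m + τ + ξ j = (ξ m + ξ j) + τ by ring,
        jtheta1_add_tau, jtheta1_add_tau]
      simp only [or_true, if_true]
      rw [hq, show (-(2 * (π:ℂ) * I * τ) - 4 * π * I * ξ m)
        = (-(π * I * τ) - 2 * π * I * (ξ m - ξ j)) + (-(π * I * τ) - 2 * π * I * (ξ m + ξ j))
        by ring]
      conv_rhs => rw [Complex.exp_add]
      ring
    · rcases eq_or_ne m j with rfl | hj
      · simp only [Function.update_self, Function.update_of_ne hk.symm]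
        rw [show ξ k - (ξ m + τ) = (ξ k - ξ m) - τ by ring,
          show ξ k + (ξ m + τ) = (ξ k + ξ m) + τ by ring,
          jtheta1_sub_tau, jtheta1_add_tau]
        simp only [true_or, if_true]
        rw [hq, show (-(2 * (π:ℂ) * I * τ) - 4 * π * I * ξ m)
          = (-(π * I * τ) + 2 * π * I * (ξ k - ξ m)) + (-(π * I * τ) - 2 * π * I * (ξ k + ξ m))
          by ring]
        conv_rhs => rw [Complex.exp_add]
        ring
      · simp only [Function.update_of_ne hj.symm, Function.update_of_ne hk.symm]
        simp [hj.symm, hk.symm]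
  rw [hsplit, pairProd_mul]
  have hr : pairProd (fun j k : Fin N => if j = m ∨ k = m then q else 1)
      = q ^ (N - 1) := by
    rw [pairProd_rowcol m _ (fun _ => q) (fun _ => q)
      (by intro j k _ hj hk; simp [hj, hk])
      (by intro j _; simp) (by intro k hk; simp [ne_of_gt hk])]
    rw [prod_ite_lt, prod_ite_gt, ← pow_add]
    congr 1
    omega
  rw [hr]
  rfl

lemma Pden_update_one {N : ℕ} (ξ : Fin N → ℂ) (τ : ℂ) (m : Fin N) :
    Pden (Function.update ξ m (ξ m + 1)) τ = Pden ξ τ := by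
  unfold Pden
  apply pairProd_congr
  intro j k hjk
  rcases eq_or_ne m k with rfl | hk
  · have hj : j ≠ m := ne_of_lt hjk
    simp only [Function.update_self, Function.update_of_ne hj]
    rw [show ξ m + 1 - ξ j = (ξ m - ξ j) + 1 by ring,
      show ξ m + 1 + ξ j = (ξ m + ξ j) + 1 by ring,
      jtheta1_add_one, jtheta1_add_one]
    ring
  · rcases eq_or_ne m j with rfl | hj
    · simp only [Function.update_self, Function.update_of_ne hk.symm]
      rw [show ξ k - (ξ m + 1) = (ξ k - ξ m) - 1 by ring,
        show ξ k + (ξ m + 1) = (ξ k + ξ m) + 1 by ring,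
        jtheta1_sub_one, jtheta1_add_one]
      ring
    · simp [Function.update_of_ne hj.symm, Function.update_of_ne hk.symm]

lemma gB_tau {N : ℕ} (ξ : Fin N → ℂ) (m : Fin N) (τ : ℂ) :
    (∏ l, jtheta1 (Function.update ξ m (ξ m + τ) l) τ)
      = (-Complex.exp (-(π * I * τ) - 2 * π * I * ξ m)) * ∏ l, jtheta1 (ξ l) τ :=
  prod_comp_update ξ m _ (fun v => jtheta1 v τ) _ (jtheta1_add_tau (ξ m) τ)

lemma gBv_tau {N : ℕ} (ξ : Fin N → ℂ) (m : Fin N) (τ : ℂ) :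
    (∏ l, jtheta1 (2 * Function.update ξ m (ξ m + τ) l) (2 * τ))
      = (-Complex.exp (-(2 * π * I * τ) - 4 * π * I * ξ m)) * ∏ l, jtheta1 (2 * ξ l) (2 * τ) := by
  refine prod_comp_update ξ m _ (fun v => jtheta1 (2 * v) (2 * τ)) _ ?_
  show jtheta1 (2 * (ξ m + τ)) (2 * τ) = _
  rw [show 2 * (ξ m + τ) = 2 * ξ m + 2 * τ by ring, jtheta1_add_tau,
    show -(π * I * (2 * τ)) - 2 * π * I * (2 * ξ m) = -(2 * π * I * τ) - 4 * π * I * ξ m by ring]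

lemma gC_tau {N : ℕ} (ξ : Fin N → ℂ) (m : Fin N) (τ : ℂ) :
    (∏ l, jtheta1 (2 * Function.update ξ m (ξ m + τ) l) τ)
      = Complex.exp (-(4 * π * I * τ) - 8 * π * I * ξ m) * ∏ l, jtheta1 (2 * ξ l) τ := by
  refine prod_comp_update ξ m _ (fun v => jtheta1 (2 * v) τ) _ ?_
  show jtheta1 (2 * (ξ m + τ)) τ = _
  rw [show 2 * (ξ m + τ) = 2 * ξ m + τ + τ by ring, jtheta1_add_tau, jtheta1_add_tau,
    ← mul_assoc, neg_mul_neg, ← Complex.exp_add,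
    show -(π * I * τ) - 2 * π * I * (2 * ξ m + τ) + (-(π * I * τ) - 2 * π * I * (2 * ξ m))
      = -(4 * π * I * τ) - 8 * π * I * ξ m by ring]

lemma gCv_tau {N : ℕ} (ξ : Fin N → ℂ) (m : Fin N) (τ : ℂ) :
    (∏ l, jtheta1 (Function.update ξ m (ξ m + τ) l) (τ / 2))
      = Complex.exp (-(2 * π * I * τ) - 4 * π * I * ξ m) * ∏ l, jtheta1 (ξ l) (τ / 2) := by
  refine prod_comp_update ξ m _ (fun v => jtheta1 v (τ / 2)) _ ?_
  show jtheta1 (ξ m + τ) (τ / 2) = _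
  rw [show ξ m + τ = ξ m + τ / 2 + τ / 2 by ring, jtheta1_add_tau, jtheta1_add_tau,
    ← mul_assoc, neg_mul_neg, ← Complex.exp_add,
    show -(π * I * (τ / 2)) - 2 * π * I * (ξ m + τ / 2) + (-(π * I * (τ / 2)) - 2 * π * I * ξ m)
      = -(2 * π * I * τ) - 4 * π * I * ξ m by ring]

lemma gBC_tau {N : ℕ} (ξ : Fin N → ℂ) (m : Fin N) (τ : ℂ) :
    (∏ l, jtheta1 (Function.update ξ m (ξ m + τ) l) τ *
        jtheta0 (2 * Function.update ξ m (ξ m + τ) l) (2 * τ))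
      = Complex.exp (-(3 * π * I * τ) - 6 * π * I * ξ m) *
        ∏ l, jtheta1 (ξ l) τ * jtheta0 (2 * ξ l) (2 * τ) := by
  refine prod_comp_update ξ m _ (fun v => jtheta1 v τ * jtheta0 (2 * v) (2 * τ)) _ ?_
  show jtheta1 (ξ m + τ) τ * jtheta0 (2 * (ξ m + τ)) (2 * τ) = _
  rw [jtheta1_add_tau, show 2 * (ξ m + τ) = 2 * ξ m + 2 * τ by ring, jtheta0_add_tau,
    mul_mul_mul_comm, neg_mul_neg, ← Complex.exp_add,
    show -(π * I * τ) - 2 * π * I * ξ m + (-(π * I * (2 * τ)) - 2 * π * I * (2 * ξ m))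
      = -(3 * π * I * τ) - 6 * π * I * ξ m by ring]

-- prefactor identities, shift by one

lemma gB_one {N : ℕ} (ξ : Fin N → ℂ) (m : Fin N) (τ : ℂ) :
    (∏ l, jtheta1 (Function.update ξ m (ξ m + 1) l) τ)
      = (-1 : ℂ) * ∏ l, jtheta1 (ξ l) τ := by
  refine prod_comp_update ξ m _ (fun v => jtheta1 v τ) _ ?_
  show jtheta1 (ξ m + 1) τ = _
  rw [jtheta1_add_one]; ring

lemma gBv_one {N : ℕ} (ξ : Fin N → ℂ) (m : Fin N) (τ : ℂ) :
    (∏ l, jtheta1 (2 * Function.update ξ m (ξ m + 1) l) (2 * τ))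
      = (1 : ℂ) * ∏ l, jtheta1 (2 * ξ l) (2 * τ) := by
  refine prod_comp_update ξ m _ (fun v => jtheta1 (2 * v) (2 * τ)) _ ?_
  show jtheta1 (2 * (ξ m + 1)) (2 * τ) = _
  rw [show 2 * (ξ m + 1) = 2 * ξ m + 1 + 1 by ring, jtheta1_add_one, jtheta1_add_one]; ring

lemma gC_one {N : ℕ} (ξ : Fin N → ℂ) (m : Fin N) (τ : ℂ) :
    (∏ l, jtheta1 (2 * Function.update ξ m (ξ m + 1) l) τ)
      = (1 : ℂ) * ∏ l, jtheta1 (2 * ξ l) τ := by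
  refine prod_comp_update ξ m _ (fun v => jtheta1 (2 * v) τ) _ ?_
  show jtheta1 (2 * (ξ m + 1)) τ = _
  rw [show 2 * (ξ m + 1) = 2 * ξ m + 1 + 1 by ring, jtheta1_add_one, jtheta1_add_one]; ring

lemma gCv_one {N : ℕ} (ξ : Fin N → ℂ) (m : Fin N) (τ : ℂ) :
    (∏ l, jtheta1 (Function.update ξ m (ξ m + 1) l) (τ / 2))
      = (-1 : ℂ) * ∏ l, jtheta1 (ξ l) (τ / 2) := by
  refine prod_comp_update ξ m _ (fun v => jtheta1 v (τ / 2)) _ ?_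
  show jtheta1 (ξ m + 1) (τ / 2) = _
  rw [jtheta1_add_one]; ring

lemma gBC_one {N : ℕ} (ξ : Fin N → ℂ) (m : Fin N) (τ : ℂ) :
    (∏ l, jtheta1 (Function.update ξ m (ξ m + 1) l) τ *
        jtheta0 (2 * Function.update ξ m (ξ m + 1) l) (2 * τ))
      = (-1 : ℂ) * ∏ l, jtheta1 (ξ l) τ * jtheta0 (2 * ξ l) (2 * τ) := by
  refine prod_comp_update ξ m _ (fun v => jtheta1 v τ * jtheta0 (2 * v) (2 * τ)) _ ?_
  show jtheta1 (ξ m + 1) τ * jtheta0 (2 * (ξ m + 1)) (2 * τ) = _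
  rw [jtheta1_add_one, show 2 * (ξ m + 1) = 2 * ξ m + 1 + 1 by ring,
    jtheta0_add_one, jtheta0_add_one]; ring

lemma WA_update_one {N : ℕ} (ξ : Fin N → ℂ) (τ : ℂ) (m : Fin N) :
    WR RootType.A (Function.update ξ m (ξ m + 1)) τ
      = (-1 : ℂ) ^ (N - 1) * WR RootType.A ξ τ := by
  show pairProd _ = _ * pairProd _
  have hsplit : pairProd (fun j k => jtheta1 (Function.update ξ m (ξ m + 1) k
        - Function.update ξ m (ξ m + 1) j) τ)
      = pairProd (fun j k => (if j = m ∨ k = m then (-1 : ℂ) else 1) *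
          jtheta1 (ξ k - ξ j) τ) := by
    apply pairProd_congr
    intro j k hjk
    rcases eq_or_ne m k with rfl | hk
    · have hj : j ≠ m := ne_of_lt hjk
      simp only [Function.update_self, Function.update_of_ne hj]
      rw [show ξ m + 1 - ξ j = (ξ m - ξ j) + 1 by ring, jtheta1_add_one]
      simp only [or_true, if_true]; ring
    · rcases eq_or_ne m j with rfl | hj
      · simp only [Function.update_self, Function.update_of_ne hk.symm]
        rw [show ξ k - (ξ m + 1) = (ξ k - ξ m) - 1 by ring, jtheta1_sub_one]
        simp only [true_or, if_true]; ring
      · simp only [Function.update_of_ne hj.symm, Function.update_of_ne hk.symm]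
        simp [hj.symm, hk.symm]
  rw [hsplit, pairProd_mul]
  have hr : pairProd (fun j k : Fin N => if j = m ∨ k = m then (-1 : ℂ) else 1)
      = (-1 : ℂ) ^ (N - 1) := by
    rw [pairProd_rowcol m _ (fun _ => (-1 : ℂ)) (fun _ => (-1 : ℂ))
      (by intro j k _ hj hk; simp [hj, hk])
      (by intro j _; simp) (by intro k hk; simp [ne_of_gt hk]),
      prod_ite_lt, prod_ite_gt, ← pow_add]
    congr 1
    omega
  rw [hr]

lemma WA_update_tau {N : ℕ} (ξ : Fin N → ℂ) (τ : ℂ) (m : Fin N) :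
    WR RootType.A (Function.update ξ m (ξ m + τ)) τ
      = (∏ j, if j < m then -Complex.exp (-(π * I * τ) - 2 * π * I * (ξ m - ξ j)) else 1) *
        ((∏ k, if m < k then -Complex.exp (-(π * I * τ) + 2 * π * I * (ξ k - ξ m)) else 1) *
          WR RootType.A ξ τ) := by
  show pairProd _ = _ * (_ * pairProd _)
  have hsplit : pairProd (fun j k => jtheta1 (Function.update ξ m (ξ m + τ) k
        - Function.update ξ m (ξ m + τ) j) τ)
      = pairProd (fun j k =>
          (if k = m then -Complex.exp (-(π * I * τ) - 2 * π * I * (ξ m - ξ j))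
           else if j = m then -Complex.exp (-(π * I * τ) + 2 * π * I * (ξ k - ξ m)) else 1) *
          jtheta1 (ξ k - ξ j) τ) := by
    apply pairProd_congr
    intro j k hjk
    rcases eq_or_ne m k with rfl | hk
    · have hj : j ≠ m := ne_of_lt hjk
      simp only [Function.update_self, Function.update_of_ne hj, if_pos rfl]
      rw [show ξ m + τ - ξ j = (ξ m - ξ j) + τ by ring, jtheta1_add_tau]
      simp
    · rcases eq_or_ne m j with rfl | hj
      · simp only [Function.update_self, Function.update_of_ne hk.symm,
          if_neg hk.symm, if_pos rfl]
        rw [show ξ k - (ξ m + τ) = (ξ k - ξ m) - τ by ring, jtheta1_sub_tau]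
        simp
      · simp only [Function.update_of_ne hj.symm, Function.update_of_ne hk.symm,
          if_neg hk.symm, if_neg hj.symm, one_mul]
  rw [hsplit, pairProd_mul, pairProd_rowcol m _
    (fun j => -Complex.exp (-(π * I * τ) - 2 * π * I * (ξ m - ξ j)))
    (fun k => -Complex.exp (-(π * I * τ) + 2 * π * I * (ξ k - ξ m)))
    (by intro j k _ hj hk; simp [hj, hk])
    (by intro j _; simp)
    (by intro k hk; simp [ne_of_gt hk]), mul_assoc]

lemma abs_neg_exp (w : ℂ) : ‖-Complex.exp w‖ = Real.exp w.re := by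
  simp [Complex.norm_exp]

lemma re1 (τ v : ℂ) : (-(↑π * I * τ) - 2 * ↑π * I * v).re = π * τ.im + 2 * π * v.im := by
  simp [Complex.mul_re, Complex.mul_im] <;> ring

lemma re2 (τ v : ℂ) : (-(2 * ↑π * I * τ) - 4 * ↑π * I * v).re = 2 * π * τ.im + 4 * π * v.im := by
  simp [Complex.mul_re, Complex.mul_im] <;> ring

lemma re3 (τ v : ℂ) : (-(4 * ↑π * I * τ) - 8 * ↑π * I * v).re = 4 * π * τ.im + 8 * π * v.im := by
  simp [Complex.mul_re, Complex.mul_im] <;> ring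

lemma re4 (τ v : ℂ) : (-(3 * ↑π * I * τ) - 6 * ↑π * I * v).re = 3 * π * τ.im + 6 * π * v.im := by
  simp [Complex.mul_re, Complex.mul_im] <;> ring

lemma re5 (τ v : ℂ) : (-(↑π * I * τ) + 2 * ↑π * I * v).re = π * τ.im - 2 * π * v.im := by
  simp [Complex.mul_re, Complex.mul_im] <;> ring

lemma abs_sq_mu (c0 c1 : ℂ) (k : ℕ) (x y : ℂ)
    (hxy : x = Complex.exp c0 * Complex.exp c1 ^ k * y ∨
      x = -Complex.exp c0 * Complex.exp c1 ^ k * y) :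
    ‖x‖ ^ 2 = Real.exp (2 * c0.re + 2 * k * c1.re) * ‖y‖ ^ 2 := by
  have habs : ‖x‖ = Real.exp (c0.re + k * c1.re) * ‖y‖ := by
    rcases hxy with h | h <;>
    · rw [h, norm_mul, norm_mul, norm_pow]
      first
      | rw [Complex.norm_exp, Complex.norm_exp]
      | rw [abs_neg_exp, Complex.norm_exp]
      rw [← Real.exp_nat_mul, ← Real.exp_add]
  rw [habs, mul_pow, ← Real.exp_nat_mul]
  congr 1
  push_cast
  ring_nf

section absWR
variable {N : ℕ} (ξ : Fin N → ℂ) (τ : ℂ) (m : Fin N)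

lemma absWR_B_tau (hN : 1 ≤ N) :
    ‖WR RootType.B (Function.update ξ m (ξ m + τ)) τ‖ ^ 2
      = Real.exp ((calN RootType.B N : ℝ) * (2 * π * τ.im + 4 * π * (ξ m).im)) *
        ‖WR RootType.B ξ τ‖ ^ 2 := by
  have h : WR RootType.B (Function.update ξ m (ξ m + τ)) τ
      = -Complex.exp (-(π * I * τ) - 2 * π * I * ξ m) *
        Complex.exp (-(2 * π * I * τ) - 4 * π * I * ξ m) ^ (N - 1) * WR RootType.B ξ τ := by
    show (∏ l, jtheta1 (Function.update ξ m (ξ m + τ) l) τ) *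
        Pden (Function.update ξ m (ξ m + τ)) τ
        = _ * ((∏ l, jtheta1 (ξ l) τ) * Pden ξ τ)
    rw [gB_tau, Pden_update_tau]; ring
  rw [abs_sq_mu _ _ _ _ _ (Or.inr h)]
  congr 1
  rw [re1, re2]
  simp only [calN]
  push_cast [Nat.cast_sub hN, Nat.cast_sub (show 1 ≤ 2 * N by omega)]
  ring

lemma absWR_Bv_tau (hN : 1 ≤ N) :
    ‖WR RootType.Bv (Function.update ξ m (ξ m + τ)) τ‖ ^ 2
      = Real.exp ((calN RootType.Bv N : ℝ) * (2 * π * τ.im + 4 * π * (ξ m).im)) *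
        ‖WR RootType.Bv ξ τ‖ ^ 2 := by
  have h : WR RootType.Bv (Function.update ξ m (ξ m + τ)) τ
      = -Complex.exp (-(2 * π * I * τ) - 4 * π * I * ξ m) *
        Complex.exp (-(2 * π * I * τ) - 4 * π * I * ξ m) ^ (N - 1) * WR RootType.Bv ξ τ := by
    show (∏ l, jtheta1 (2 * Function.update ξ m (ξ m + τ) l) (2 * τ)) *
        Pden (Function.update ξ m (ξ m + τ)) τ
        = _ * ((∏ l, jtheta1 (2 * ξ l) (2 * τ)) * Pden ξ τ)
    rw [gBv_tau, Pden_update_tau]; ring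
  rw [abs_sq_mu _ _ _ _ _ (Or.inr h)]
  congr 1
  rw [re2]
  simp only [calN]
  push_cast [Nat.cast_sub hN, Nat.cast_sub (show 1 ≤ 2 * N by omega)]
  ring

lemma absWR_C_tau (hN : 1 ≤ N) :
    ‖WR RootType.C (Function.update ξ m (ξ m + τ)) τ‖ ^ 2
      = Real.exp ((calN RootType.C N : ℝ) * (2 * π * τ.im + 4 * π * (ξ m).im)) *
        ‖WR RootType.C ξ τ‖ ^ 2 := by
  have h : WR RootType.C (Function.update ξ m (ξ m + τ)) τ
      = Complex.exp (-(4 * π * I * τ) - 8 * π * I * ξ m) *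
        Complex.exp (-(2 * π * I * τ) - 4 * π * I * ξ m) ^ (N - 1) * WR RootType.C ξ τ := by
    show (∏ l, jtheta1 (2 * Function.update ξ m (ξ m + τ) l) τ) *
        Pden (Function.update ξ m (ξ m + τ)) τ
        = _ * ((∏ l, jtheta1 (2 * ξ l) τ) * Pden ξ τ)
    rw [gC_tau, Pden_update_tau]; ring
  rw [abs_sq_mu _ _ _ _ _ (Or.inl h)]
  congr 1
  rw [re3, re2]
  simp only [calN]
  push_cast [Nat.cast_sub hN, Nat.cast_sub (show 1 ≤ 2 * N by omega)]
  ring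

lemma absWR_Cv_tau (hN : 1 ≤ N) :
    ‖WR RootType.Cv (Function.update ξ m (ξ m + τ)) τ‖ ^ 2
      = Real.exp ((calN RootType.Cv N : ℝ) * (2 * π * τ.im + 4 * π * (ξ m).im)) *
        ‖WR RootType.Cv ξ τ‖ ^ 2 := by
  have h : WR RootType.Cv (Function.update ξ m (ξ m + τ)) τ
      = Complex.exp (-(2 * π * I * τ) - 4 * π * I * ξ m) *
        Complex.exp (-(2 * π * I * τ) - 4 * π * I * ξ m) ^ (N - 1) * WR RootType.Cv ξ τ := by
    show (∏ l, jtheta1 (Function.update ξ m (ξ m + τ) l) (τ / 2)) *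
        Pden (Function.update ξ m (ξ m + τ)) τ
        = _ * ((∏ l, jtheta1 (ξ l) (τ / 2)) * Pden ξ τ)
    rw [gCv_tau, Pden_update_tau]; ring
  rw [abs_sq_mu _ _ _ _ _ (Or.inl h)]
  congr 1
  rw [re2]
  simp only [calN]
  push_cast [Nat.cast_sub hN, Nat.cast_sub (show 1 ≤ 2 * N by omega)]
  ring

lemma absWR_BC_tau (hN : 1 ≤ N) :
    ‖WR RootType.BC (Function.update ξ m (ξ m + τ)) τ‖ ^ 2
      = Real.exp ((calN RootType.BC N : ℝ) * (2 * π * τ.im + 4 * π * (ξ m).im)) *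
        ‖WR RootType.BC ξ τ‖ ^ 2 := by
  have h : WR RootType.BC (Function.update ξ m (ξ m + τ)) τ
      = Complex.exp (-(3 * π * I * τ) - 6 * π * I * ξ m) *
        Complex.exp (-(2 * π * I * τ) - 4 * π * I * ξ m) ^ (N - 1) * WR RootType.BC ξ τ := by
    show (∏ l, jtheta1 (Function.update ξ m (ξ m + τ) l) τ *
          jtheta0 (2 * Function.update ξ m (ξ m + τ) l) (2 * τ)) *
        Pden (Function.update ξ m (ξ m + τ)) τ
        = _ * ((∏ l, jtheta1 (ξ l) τ * jtheta0 (2 * ξ l) (2 * τ)) * Pden ξ τ)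
    rw [gBC_tau, Pden_update_tau]; ring
  rw [abs_sq_mu _ _ _ _ _ (Or.inl h)]
  congr 1
  rw [re4, re2]
  simp only [calN]
  push_cast [Nat.cast_sub hN, Nat.cast_sub (show 1 ≤ 2 * N by omega)]
  ring

lemma absWR_D_tau (hN : 1 ≤ N) :
    ‖WR RootType.D (Function.update ξ m (ξ m + τ)) τ‖ ^ 2
      = Real.exp ((calN RootType.D N : ℝ) * (2 * π * τ.im + 4 * π * (ξ m).im)) *
        ‖WR RootType.D ξ τ‖ ^ 2 := by
  have h : WR RootType.D (Function.update ξ m (ξ m + τ)) τ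
      = Complex.exp 0 *
        Complex.exp (-(2 * π * I * τ) - 4 * π * I * ξ m) ^ (N - 1) * WR RootType.D ξ τ := by
    rw [Complex.exp_zero, one_mul]
    exact Pden_update_tau ξ τ m
  rw [abs_sq_mu _ _ _ _ _ (Or.inl h)]
  congr 1
  rw [re2]
  simp only [calN, Complex.zero_re]
  push_cast [Nat.cast_sub hN, Nat.cast_sub (show 1 ≤ 2 * N by omega)]
  ring

-- shift by one: abs² unchanged

lemma absWR_B_one :
    ‖WR RootType.B (Function.update ξ m (ξ m + 1)) τ‖ ^ 2
      = ‖WR RootType.B ξ τ‖ ^ 2 := by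
  have h : WR RootType.B (Function.update ξ m (ξ m + 1)) τ = (-1 : ℂ) * WR RootType.B ξ τ := by
    show (∏ l, jtheta1 (Function.update ξ m (ξ m + 1) l) τ) *
        Pden (Function.update ξ m (ξ m + 1)) τ
        = _ * ((∏ l, jtheta1 (ξ l) τ) * Pden ξ τ)
    rw [gB_one, Pden_update_one]; ring
  rw [h]; simp

lemma absWR_Bv_one :
    ‖WR RootType.Bv (Function.update ξ m (ξ m + 1)) τ‖ ^ 2
      = ‖WR RootType.Bv ξ τ‖ ^ 2 := by
  have h : WR RootType.Bv (Function.update ξ m (ξ m + 1)) τ = WR RootType.Bv ξ τ := by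
    show (∏ l, jtheta1 (2 * Function.update ξ m (ξ m + 1) l) (2 * τ)) *
        Pden (Function.update ξ m (ξ m + 1)) τ
        = (∏ l, jtheta1 (2 * ξ l) (2 * τ)) * Pden ξ τ
    rw [gBv_one, Pden_update_one]; ring
  rw [h]

lemma absWR_C_one :
    ‖WR RootType.C (Function.update ξ m (ξ m + 1)) τ‖ ^ 2
      = ‖WR RootType.C ξ τ‖ ^ 2 := by
  have h : WR RootType.C (Function.update ξ m (ξ m + 1)) τ = WR RootType.C ξ τ := by
    show (∏ l, jtheta1 (2 * Function.update ξ m (ξ m + 1) l) τ) *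
        Pden (Function.update ξ m (ξ m + 1)) τ
        = (∏ l, jtheta1 (2 * ξ l) τ) * Pden ξ τ
    rw [gC_one, Pden_update_one]; ring
  rw [h]

lemma absWR_Cv_one :
    ‖WR RootType.Cv (Function.update ξ m (ξ m + 1)) τ‖ ^ 2
      = ‖WR RootType.Cv ξ τ‖ ^ 2 := by
  have h : WR RootType.Cv (Function.update ξ m (ξ m + 1)) τ = (-1 : ℂ) * WR RootType.Cv ξ τ := by
    show (∏ l, jtheta1 (Function.update ξ m (ξ m + 1) l) (τ / 2)) *
        Pden (Function.update ξ m (ξ m + 1)) τ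
        = _ * ((∏ l, jtheta1 (ξ l) (τ / 2)) * Pden ξ τ)
    rw [gCv_one, Pden_update_one]; ring
  rw [h]; simp

lemma absWR_BC_one :
    ‖WR RootType.BC (Function.update ξ m (ξ m + 1)) τ‖ ^ 2
      = ‖WR RootType.BC ξ τ‖ ^ 2 := by
  have h : WR RootType.BC (Function.update ξ m (ξ m + 1)) τ = (-1 : ℂ) * WR RootType.BC ξ τ := by
    show (∏ l, jtheta1 (Function.update ξ m (ξ m + 1) l) τ *
          jtheta0 (2 * Function.update ξ m (ξ m + 1) l) (2 * τ)) *
        Pden (Function.update ξ m (ξ m + 1)) τ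
        = _ * ((∏ l, jtheta1 (ξ l) τ * jtheta0 (2 * ξ l) (2 * τ)) * Pden ξ τ)
    rw [gBC_one, Pden_update_one]; ring
  rw [h]; simp

lemma absWR_D_one :
    ‖WR RootType.D (Function.update ξ m (ξ m + 1)) τ‖ ^ 2
      = ‖WR RootType.D ξ τ‖ ^ 2 := by
  have h : WR RootType.D (Function.update ξ m (ξ m + 1)) τ = WR RootType.D ξ τ :=
    Pden_update_one ξ τ m
  rw [h]

lemma absWR_A_one :
    ‖WR RootType.A (Function.update ξ m (ξ m + 1)) τ‖ ^ 2
      = ‖WR RootType.A ξ τ‖ ^ 2 := by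
  rw [WA_update_one]
  rw [norm_mul, norm_pow]
  simp

lemma absWR_A_tau :
    ‖WR RootType.A (Function.update ξ m (ξ m + τ)) τ‖ ^ 2
      = Real.exp (2 * ((∑ j, (π * τ.im + 2 * π * ((ξ m).im - (ξ j).im))) - π * τ.im)) *
        ‖WR RootType.A ξ τ‖ ^ 2 := by
  rw [WA_update_tau, norm_mul, norm_mul]
  have h1 : ‖∏ j, if j < m
        then -Complex.exp (-(π * I * τ) - 2 * π * I * (ξ m - ξ j)) else 1‖
      = Real.exp (∑ j, if j < m then π * τ.im + 2 * π * ((ξ m).im - (ξ j).im) else 0) := by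
    rw [norm_prod, ← prod_ite_exp]
    refine Finset.prod_congr rfl fun j _ => ?_
    rw [apply_ite (fun x : ℂ => ‖x‖), abs_neg_exp, norm_one, re1]
    simp [Complex.sub_im]
  have h2 : ‖∏ k, if m < k
        then -Complex.exp (-(π * I * τ) + 2 * π * I * (ξ k - ξ m)) else 1‖
      = Real.exp (∑ k, if m < k then π * τ.im + 2 * π * ((ξ m).im - (ξ k).im) else 0) := by
    rw [norm_prod, ← prod_ite_exp]
    refine Finset.prod_congr rfl fun k _ => ?_
    rw [apply_ite (fun x : ℂ => ‖x‖), abs_neg_exp, norm_one, re5]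
    simp only [Complex.sub_im]
    congr 1
    ring
  rw [h1, h2, mul_pow, mul_pow, ← mul_assoc, ← Real.exp_nat_mul, ← Real.exp_nat_mul,
    ← Real.exp_add]
  congr 2
  have hs := sum_split m (fun j => π * τ.im + 2 * π * ((ξ m).im - (ξ j).im))
  push_cast
  linarith [hs]

end absWR

lemma abs_jtheta0_add_tau (v τ : ℂ) :
    ‖jtheta0 (v + τ) τ‖ = Real.exp (π * τ.im + 2 * π * v.im) *
      ‖jtheta0 v τ‖ := by
  rw [jtheta0_add_tau, norm_mul, abs_neg_exp, re1]

lemma abs_jtheta3_add_tau (v τ : ℂ) :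
    ‖jtheta3 (v + τ) τ‖ = Real.exp (π * τ.im + 2 * π * v.im) *
      ‖jtheta3 v τ‖ := by
  rw [jtheta3_add_tau, norm_mul, Complex.norm_exp, re1]

lemma sum_im_sq_update {N : ℕ} (z : Fin N → ℂ) (m : Fin N) (d : ℂ) :
    ∑ j, ((Function.update z m (z m + d) j).im) ^ 2
      = (∑ j, ((z j).im) ^ 2) + (2 * (z m).im * d.im + d.im ^ 2) := by
  rw [← Finset.sum_erase_add Finset.univ _ (Finset.mem_univ m),
    ← Finset.sum_erase_add Finset.univ (fun j => ((z j).im) ^ 2) (Finset.mem_univ m)]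
  have hcong : (∑ j ∈ Finset.univ.erase m, ((Function.update z m (z m + d) j).im) ^ 2)
      = ∑ j ∈ Finset.univ.erase m, ((z j).im) ^ 2 :=
    Finset.sum_congr rfl fun j hj => by
      rw [Function.update_of_ne (Finset.ne_of_mem_erase hj)]
  rw [hcong, Function.update_self, Complex.add_im]
  ring

lemma update_div_eq {N : ℕ} (z : Fin N → ℂ) (m : Fin N) (c : ℂ) (L : ℝ) :
    (fun j => Function.update z m c j / (L:ℂ))
      = Function.update (fun j => z j / (L:ℂ)) m (c / L) := by
  funext j
  by_cases h : j = m
  · subst h; simp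
  · simp [Function.update_of_ne h]

lemma sum_update_div {N : ℕ} (z : Fin N → ℂ) (m : Fin N) (d : ℂ) (L : ℝ) :
    ∑ k, Function.update z m (z m + d) k / (L:ℂ) = (∑ k, z k / (L:ℂ)) + d / L := by
  rw [← Finset.sum_erase_add Finset.univ _ (Finset.mem_univ m),
    ← Finset.sum_erase_add Finset.univ (fun k => z k / (L:ℂ)) (Finset.mem_univ m)]
  have hcong : (∑ k ∈ Finset.univ.erase m, Function.update z m (z m + d) k / (L:ℂ))
      = ∑ k ∈ Finset.univ.erase m, z k / (L:ℂ) :=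
    Finset.sum_congr rfl fun j hj => by
      rw [Function.update_of_ne (Finset.ne_of_mem_erase hj)]
  rw [hcong, Function.update_self, add_div]
  ring

lemma QR_def_nonA {N : ℕ} (R : RootType) (hR : R ≠ RootType.A) (L W : ℝ) (z : Fin N → ℂ) :
    QR R L W z = Real.exp (-(2 * π * (calN R N) / (L * W)) * ∑ j, (z j).im ^ 2) *
      ‖WR R (fun j => z j / L) (I * W / L)‖ ^ 2 := by
  cases R
  · exact absurd rfl hR
  all_goals rfl

lemma glue_tau {N : ℕ} (hN : 1 ≤ N) (L W : ℝ) (hL : 0 < L) (hW : 0 < W)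
    (R : RootType) (hR : R ≠ RootType.A) (m : Fin N) (z : Fin N → ℂ)
    (habs : ∀ (ξ : Fin N → ℂ) (τ : ℂ),
      ‖WR R (Function.update ξ m (ξ m + τ)) τ‖ ^ 2
        = Real.exp ((calN R N : ℝ) * (2 * π * τ.im + 4 * π * (ξ m).im)) *
          ‖WR R ξ τ‖ ^ 2) :
    QR R L W (Function.update z m (z m + I * W)) = QR R L W z := by
  rw [QR_def_nonA R hR, QR_def_nonA R hR, update_div_eq,
    show (z m + I * (W:ℂ)) / (L:ℂ) = (fun j => z j / (L:ℂ)) m + I * W / L by rw [add_div],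
    habs, sum_im_sq_update]
  simp only [Complex.div_ofReal_im, Complex.I_mul_im, Complex.ofReal_re]
  rw [← mul_assoc, ← Real.exp_add]
  congr 1
  field_simp
  ring

lemma glue_one {N : ℕ} (L W : ℝ) (hL : 0 < L) (hW : 0 < W)
    (R : RootType) (hR : R ≠ RootType.A) (m : Fin N) (z : Fin N → ℂ)
    (habs : ∀ (ξ : Fin N → ℂ) (τ : ℂ),
      ‖WR R (Function.update ξ m (ξ m + 1)) τ‖ ^ 2
        = ‖WR R ξ τ‖ ^ 2) :
    QR R L W (Function.update z m (z m + (L:ℂ))) = QR R L W z := by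
  rw [QR_def_nonA R hR, QR_def_nonA R hR, update_div_eq,
    show ((z m + (L:ℂ)) / (L:ℂ)) = (fun j => z j / (L:ℂ)) m + 1 by
      rw [add_div, div_self (Complex.ofReal_ne_zero.mpr hL.ne')],
    habs, sum_im_sq_update]
  norm_num

lemma sum_update_add {N : ℕ} (ξ : Fin N → ℂ) (m : Fin N) (c : ℂ) :
    Finset.univ.sum (Function.update ξ m (ξ m + c)) = (∑ k, ξ k) + c := by
  rw [Finset.sum_update_of_mem (Finset.mem_univ m), ← Finset.erase_eq,
    ← Finset.sum_erase_add Finset.univ ξ (Finset.mem_univ m)]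
  ring

lemma QR_def_A {N : ℕ} (L W : ℝ) (z : Fin N → ℂ) :
    QR RootType.A L W z
      = Real.exp (-(2 * π * N / (L * W)) * ∑ j, (z j).im ^ 2) *
        ‖if Even N then jtheta0 (∑ k, z k / L) (I * W / L)
          else jtheta3 (∑ k, z k / L) (I * W / L)‖ ^ 2 *
        ‖WR RootType.A (fun j => z j / L) (I * W / L)‖ ^ 2 := rfl

lemma exp_shuffle (a b c d : ℝ) (T A : ℝ) (h : a + b + c = d) :
    Real.exp a * (Real.exp b * T) * (Real.exp c * A) = Real.exp d * T * A := by
  rw [← h, Real.exp_add, Real.exp_add]; ring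

lemma glue_A_one {N : ℕ} (L W : ℝ) (hL : 0 < L) (hW : 0 < W) (m : Fin N) (z : Fin N → ℂ) :
    QR RootType.A L W (Function.update z m (z m + (L:ℂ))) = QR RootType.A L W z := by
  have hL' : (L:ℂ) ≠ 0 := Complex.ofReal_ne_zero.mpr hL.ne'
  rw [QR_def_A, QR_def_A, update_div_eq,
    show ((z m + (L:ℂ)) / (L:ℂ)) = (fun j => z j / (L:ℂ)) m + 1 by
      rw [add_div, div_self hL'],
    sum_update_add, sum_im_sq_update, absWR_A_one]
  by_cases hE : Even N
  · simp only [if_pos hE, jtheta0_add_one]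
    norm_num
  · simp only [if_neg hE, jtheta3_add_one]
    norm_num

lemma glue_A_tau {N : ℕ} (L W : ℝ) (hL : 0 < L) (hW : 0 < W) (m : Fin N) (z : Fin N → ℂ) :
    QR RootType.A L W (Function.update z m (z m + I * W)) = QR RootType.A L W z := by
  rw [QR_def_A, QR_def_A, update_div_eq,
    show (z m + I * (W:ℂ)) / (L:ℂ) = (fun j => z j / (L:ℂ)) m + I * W / L by rw [add_div],
    sum_update_add, absWR_A_tau, sum_im_sq_update]
  have hfin : ∀ e1 : ℝ, Real.exp e1 ^ 2 = Real.exp (2 * e1) := by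
    intro e1; rw [← Real.exp_nat_mul]; norm_num
  by_cases hE : Even N
  · simp only [if_pos hE]
    rw [abs_jtheta0_add_tau, mul_pow, hfin]
    apply exp_shuffle
    simp only [Complex.div_ofReal_im, Complex.I_mul_im, Complex.ofReal_re, Complex.im_sum]
    simp only [Finset.sum_add_distrib, Finset.sum_sub_distrib, ← Finset.mul_sum,
      Finset.sum_const, Finset.card_univ, Fintype.card_fin, nsmul_eq_mul, ← Finset.sum_div]
    field_simp
    ring
  · simp only [if_neg hE]
    rw [abs_jtheta3_add_tau, mul_pow, hfin]
    apply exp_shuffle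
    simp only [Complex.div_ofReal_im, Complex.I_mul_im, Complex.ofReal_re, Complex.im_sum]
    simp only [Finset.sum_add_distrib, Finset.sum_sub_distrib, ← Finset.mul_sum,
      Finset.sum_const, Finset.card_univ, Fintype.card_fin, nsmul_eq_mul, ← Finset.sum_div]
    field_simp
    ring

theorem statement1 (N : ℕ) (hN : 1 ≤ N) (L W : ℝ) (hL : 0 < L) (hW : 0 < W)
    (R : RootType) (m : Fin N) (z : Fin N → ℂ) :
    QR R L W (Function.update z m (z m + (L : ℂ))) = QR R L W z ∧
    QR R L W (Function.update z m (z m + I * W)) = QR R L W z := by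
  constructor
  · cases R with
    | A => exact glue_A_one L W hL hW m z
    | B => exact glue_one L W hL hW _ (by simp) m z (fun ξ τ => absWR_B_one ξ τ m)
    | Bv => exact glue_one L W hL hW _ (by simp) m z (fun ξ τ => absWR_Bv_one ξ τ m)
    | C => exact glue_one L W hL hW _ (by simp) m z (fun ξ τ => absWR_C_one ξ τ m)
    | Cv => exact glue_one L W hL hW _ (by simp) m z (fun ξ τ => absWR_Cv_one ξ τ m)
    | BC => exact glue_one L W hL hW _ (by simp) m z (fun ξ τ => absWR_BC_one ξ τ m)
    | D => exact glue_one L W hL hW _ (by simp) m z (fun ξ τ => absWR_D_one ξ τ m)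
  · cases R with
    | A => exact glue_A_tau L W hL hW m z
    | B => exact glue_tau hN L W hL hW _ (by simp) m z (fun ξ τ => absWR_B_tau ξ τ m hN)
    | Bv => exact glue_tau hN L W hL hW _ (by simp) m z (fun ξ τ => absWR_Bv_tau ξ τ m hN)
    | C => exact glue_tau hN L W hL hW _ (by simp) m z (fun ξ τ => absWR_C_tau ξ τ m hN)
    | Cv => exact glue_tau hN L W hL hW _ (by simp) m z (fun ξ τ => absWR_Cv_tau ξ τ m hN)
    | BC => exact glue_tau hN L W hL hW _ (by simp) m z (fun ξ τ => absWR_BC_tau ξ τ m hN)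
    | D => exact glue_tau hN L W hL hW _ (by simp) m z (fun ξ τ => absWR_D_tau ξ τ m hN)
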